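/- The parameter μ is strictly positive: μ > 0 (possibly +∞). -/

import Mathlib

noncomputable section

open Set
open scoped Classical

/-- Convex (Fenchel) conjugate of an extended-real-valued function on `ℝ`. -/
def conj (f : ℝ → EReal) (v : ℝ) : EReal := ⨆ x : ℝ, ((v * x : ℝ) : EReal) - f x

/-- Convex subdifferential of an extended-real-valued function on `ℝ`. -/
def subdiff (f : ℝ → EReal) (x : ℝ) : Set ℝ :=
  {d : ℝ | ∀ y : ℝ, f x + ((d * (y - x) : ℝ) : EReal) ≤ f y}

/-- Convexity of an extended-real-valued function on `ℝ`. -/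
def EConvexOn (f : ℝ → EReal) : Prop :=
  ∀ x y a b : ℝ, 0 ≤ a → 0 ≤ b → a + b = 1 →
    f (a * x + b * y) ≤ (a : EReal) * f x + (b : EReal) * f y

/-- The ℓ₀-penalized regularizer `g(x) = λ‖x‖₀ + h(x)`. -/
def gfun (lam : ℝ) (h : ℝ → EReal) (x : ℝ) : EReal :=
  (if x = 0 then (0 : EReal) else (lam : EReal)) + h x

/-- The parameter `τ = sup {v ≥ 0 : h*(v) ≤ λ}` (as a real number). -/
def tau (lam : ℝ) (h : ℝ → EReal) : ℝ :=
  sSup {v : ℝ | 0 ≤ v ∧ conj h v ≤ (lam : EReal)}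

/-- The parameter `μ = sup {x ≥ 0 : x ∈ ∂h*(τ)}` if `∂h*(τ) ≠ ∅`, else `+∞`. -/
def mu (lam : ℝ) (h : ℝ → EReal) : EReal :=
  if (subdiff (conj h) (tau lam h)).Nonempty then
    sSup ((fun x : ℝ => (x : EReal)) '' {x : ℝ | 0 ≤ x ∧ x ∈ subdiff (conj h) (tau lam h)})
  else ⊤

/-- The parameter `β = sup {v ≥ 0 : v ∈ dom h*}`. -/
def beta (h : ℝ → EReal) : EReal :=
  sSup ((fun v : ℝ => (v : EReal)) '' {v : ℝ | 0 ≤ v ∧ conj h v ≠ ⊤})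

/-- The parameter `κ = sup {v ≥ 0 : v ∈ ∂h(μ)}` if `μ < +∞`, else `+∞`. -/
def kappa (lam : ℝ) (h : ℝ → EReal) : EReal :=
  if mu lam h ≠ ⊤ then
    sSup ((fun v : ℝ => (v : EReal)) '' {v : ℝ | 0 ≤ v ∧ v ∈ subdiff h (mu lam h).toReal})
  else ⊤

/-- The set of minimizers of `u ↦ ½(u − v)² + γ·ω(u)`, i.e. `prox_{γω}(v)`. -/
def proxSet (γ : ℝ) (ω : ℝ → EReal) (v : ℝ) : Set ℝ :=
  {u : ℝ | ∀ w : ℝ,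
    ((2⁻¹ * (u - v) ^ 2 : ℝ) : EReal) + (γ : EReal) * ω u ≤
      ((2⁻¹ * (w - v) ^ 2 : ℝ) : EReal) + (γ : EReal) * ω w}

lemma conj_nonneg' (h : ℝ → EReal) (h0 : h 0 = 0) (v : ℝ) : (0 : EReal) ≤ conj h v := by
  have := le_iSup (fun x : ℝ => ((v * x : ℝ) : EReal) - h x) 0
  simpa [h0, conj] using this

lemma conj_zero' (h : ℝ → EReal) (h0 : h 0 = 0) (hge : ∀ x : ℝ, 0 ≤ h x) :
    conj h 0 = 0 := by
  refine le_antisymm (iSup_le fun x => ?_) (conj_nonneg' h h0 0)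
  have : ((0 * x : ℝ) : EReal) - h x = -(h x) := by
    norm_num [sub_eq_add_neg]
  rw [this]
  simpa using EReal.neg_le_neg_iff.mpr (hge x)


theorem mu_pos (lam : ℝ) (h : ℝ → EReal) (hlam : 0 < lam)
    (h0 : h 0 = 0) (hge : ∀ x : ℝ, 0 ≤ h x)
    (hlsc : LowerSemicontinuous h) (hconv : EConvexOn h)
    (hdom : ∃ x : ℝ, 0 < x ∧ h x ≠ ⊤) :
    (0 : EReal) < mu lam h := by
  by_cases hne : (subdiff (conj h) (tau lam h)).Nonempty
  swap
  · rw [mu, if_neg hne]; exact EReal.zero_lt_top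
  obtain ⟨x0, hx0pos, hx0top⟩ := hdom
  have hx0bot : h x0 ≠ ⊥ := (lt_of_lt_of_le EReal.bot_lt_zero (hge x0)).ne'
  have hx0fin : ((h x0).toReal : EReal) = h x0 := EReal.coe_toReal hx0top hx0bot
  set S : Set ℝ := {v : ℝ | 0 ≤ v ∧ conj h v ≤ (lam : EReal)} with hSdef
  have hbdd : BddAbove S := by
    refine ⟨(lam + (h x0).toReal) / x0, fun v hv => ?_⟩
    obtain ⟨hv0, hvle⟩ := hv
    have hterm : ((v * x0 : ℝ) : EReal) - h x0 ≤ (lam : EReal) :=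
      le_trans (le_iSup (fun x : ℝ => ((v * x : ℝ) : EReal) - h x) x0) hvle
    rw [← hx0fin, ← EReal.coe_sub] at hterm
    have h2 : v * x0 - (h x0).toReal ≤ lam := EReal.coe_le_coe_iff.mp hterm
    rw [le_div_iff₀ hx0pos]
    linarith
  have h0S : (0 : ℝ) ∈ S := ⟨le_refl 0, by rw [conj_zero' h h0 hge]; exact_mod_cast hlam.le⟩
  have hτeq : tau lam h = sSup S := rfl
  have hτ0 : 0 ≤ tau lam h := hτeq ▸ le_csSup hbdd h0S
  set τ := tau lam h with hτdef
  obtain ⟨d, hd⟩ := hne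
  rw [mu, if_pos ⟨d, hd⟩]
  suffices hm : ∃ m : ℝ, 0 ≤ m ∧ m ∈ subdiff (conj h) τ ∧ 0 < m by
    obtain ⟨m, hm0, hmmem, hmpos⟩ := hm
    calc (0 : EReal) < (m : EReal) := by exact_mod_cast hmpos
      _ ≤ _ := by
          refine le_sSup ?_
          exact Set.mem_image_of_mem _ (Set.mem_setOf.mpr ⟨hm0, hmmem⟩)
  by_cases hcase : ∀ y : ℝ, τ < y → conj h y = ⊤
  · -- everything to the right is ⊤; arbitrarily large subgradients
    refine ⟨max d 0 + 1, by positivity, fun y => ?_, by positivity⟩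
    rcases lt_trichotomy y τ with hy | hy | hy
    · have hmul : (max d 0 + 1) * (y - τ) ≤ d * (y - τ) :=
        mul_le_mul_of_nonpos_right (by linarith [le_max_left d 0]) (by linarith)
      calc conj h τ + (((max d 0 + 1) * (y - τ) : ℝ) : EReal)
          ≤ conj h τ + ((d * (y - τ) : ℝ) : EReal) := by
            exact add_le_add_right (EReal.coe_le_coe_iff.mpr hmul) _
        _ ≤ conj h y := hd y
    · subst hy; simp
    · rw [hcase y hy]; exact le_top
  · push_neg at hcase
    obtain ⟨y0, hy0τ, hy0top⟩ := hcase
    -- conj h τ ≤ d * τ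
    have hd0 := hd 0
    rw [conj_zero' h h0 hge] at hd0
    have key : conj h τ ≤ ((d * τ : ℝ) : EReal) := by
      calc conj h τ = conj h τ + ((d * (0 - τ) : ℝ) : EReal) + ((d * τ : ℝ) : EReal) := by
            rw [add_assoc, ← EReal.coe_add]; norm_num
        _ ≤ 0 + ((d * τ : ℝ) : EReal) := add_le_add_left hd0 _
        _ = _ := zero_add _
    have hτtop : conj h τ ≠ ⊤ := ne_top_of_le_ne_top (EReal.coe_ne_top _) key
    have hτbot : conj h τ ≠ ⊥ := (lt_of_lt_of_le EReal.bot_lt_zero (conj_nonneg' h h0 τ)).ne'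
    set H : ℝ := (conj h τ).toReal with hHdef
    have hHeq : (H : EReal) = conj h τ := EReal.coe_toReal hτtop hτbot
    have hy0bot : conj h y0 ≠ ⊥ := (lt_of_lt_of_le EReal.bot_lt_zero (conj_nonneg' h h0 y0)).ne'
    set H2 : ℝ := (conj h y0).toReal with hH2def
    have hH2eq : (H2 : EReal) = conj h y0 := EReal.coe_toReal hy0top hy0bot
    have hHd : H ≤ d * τ := by rw [← hHeq] at key; exact_mod_cast key
    -- claim lam ≤ H
    have hlamH : lam ≤ H := by
      by_contra hcon
      push_neg at hcon
      set t : ℝ := min (1/2) ((lam - H) / (2 * (|H2 - H| + 1))) with htdef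
      have ht0 : 0 < t := by
        apply lt_min (by norm_num)
        apply div_pos (by linarith)
        positivity
      have ht1 : t ≤ 1 / 2 := min_le_left _ _
      have hchord : t * (H2 - H) < lam - H := by
        have h1 : t * (H2 - H) ≤ t * |H2 - H| :=
          mul_le_mul_of_nonneg_left (le_abs_self _) ht0.le
        have h2 : t ≤ (lam - H) / (2 * (|H2 - H| + 1)) := min_le_right _ _
        have h3 : 0 ≤ |H2 - H| := abs_nonneg _
        have hE : (0:ℝ) < |H2 - H| + 1 := by positivity
        have h4 : (lam - H) / (2 * (|H2 - H| + 1)) * (|H2 - H| + 1) = (lam - H) / 2 := by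
          field_simp
        have hmul := mul_le_mul_of_nonneg_right h2 hE.le
        rw [h4] at hmul
        nlinarith
      set v : ℝ := (1 - t) * τ + t * y0 with hvdef
      have hτv : τ < v := by
        have : v - τ = t * (y0 - τ) := by rw [hvdef]; ring
        nlinarith
      have hvS : v ∈ S := by
        constructor
        · linarith
        · have hbound : conj h v ≤ (((1 - t) * H + t * H2 : ℝ) : EReal) := by
            refine iSup_le fun x => ?_
            by_cases hx : h x = ⊤
            · rw [hx]
              rw [sub_eq_add_neg]
              simp [EReal.add_bot]
            · have hxb : h x ≠ ⊥ := (lt_of_lt_of_le EReal.bot_lt_zero (hge x)).ne'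
              have hxeq : ((h x).toReal : EReal) = h x := EReal.coe_toReal hx hxb
              set c : ℝ := (h x).toReal
              have hA : τ * x - c ≤ H := by
                have h5 : ((τ * x : ℝ) : EReal) - h x ≤ conj h τ :=
                  le_iSup (fun x : ℝ => ((τ * x : ℝ) : EReal) - h x) x
                rw [← hHeq, ← hxeq, ← EReal.coe_sub] at h5
                exact_mod_cast h5
              have hB : y0 * x - c ≤ H2 := by
                have h5 : ((y0 * x : ℝ) : EReal) - h x ≤ conj h y0 :=
                  le_iSup (fun x : ℝ => ((y0 * x : ℝ) : EReal) - h x) x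
                rw [← hH2eq, ← hxeq, ← EReal.coe_sub] at h5
                exact_mod_cast h5
              rw [← hxeq, ← EReal.coe_sub]
              have : v * x - c ≤ (1 - t) * H + t * H2 := by
                have hexp : v * x - c = (1 - t) * (τ * x - c) + t * (y0 * x - c) := by
                  rw [hvdef]; ring
                rw [hexp]
                have h1t : (0:ℝ) ≤ 1 - t := by linarith
                nlinarith
              exact_mod_cast this
          refine le_trans hbound ?_
          have : (1 - t) * H + t * H2 ≤ lam := by nlinarith
          exact_mod_cast this
      have : v ≤ τ := hτeq ▸ le_csSup hbdd hvS
      linarith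
    have hdτ : lam ≤ d * τ := le_trans hlamH hHd
    have hdpos : 0 < d := by nlinarith
    exact ⟨d, hdpos.le, hd, hdpos⟩
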